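/- Let ν⋆ be the measure on [-π/2,π/2]² supported on the diagonal y = x with density cos x · δ(x - y) (the pushforward of dγ = cos φ dφ under x ↦ (x,x)), and for 0 < λ ≤ 1 let c(x,y,λ) be as in the rough-disk resistance formula with ζ = arcsin(√(1-λ²cos²x)). Then the transversal component satisfies R_T[ν⋆, λ] = ∫ (3/4)((λ sin x + sin ζ)³/sin ζ) cos ζ · cos x dx = 3πλ/8, and the longitudinal component R_L[ν⋆, λ] = -∫ (3/4)((λ sin x + sin ζ)³/sin ζ) sin ζ · cos x dx = -3/2. -/

import Mathlib

open Real MeasureTheory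
open scoped ENNReal NNReal

noncomputable def gammaM : Measure ℝ :=
  (volume.restrict (Set.Icc (-(π/2)) (π/2))).withDensity
    (fun φ => ENNReal.ofReal (Real.cos φ))

/-- the retroreflector measure `ν⋆`, supported on the diagonal `y = x`. -/
noncomputable def nuStar : Measure (ℝ × ℝ) :=
  gammaM.map (fun x => (x, x))

noncomputable def zeta (x lam : ℝ) : ℝ :=
  Real.arcsin (Real.sqrt (1 - lam^2 * Real.cos x ^ 2))

noncomputable def cT (lam : ℝ) (p : ℝ × ℝ) : ℝ :=
  (3/4) * ((lam * Real.sin p.1 + Real.sin (zeta p.1 lam))^3 / Real.sin (zeta p.1 lam)) *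
    Real.cos ((p.1 - p.2)/2) * Real.cos (zeta p.1 lam + (p.1 - p.2)/2)

noncomputable def cL (lam : ℝ) (p : ℝ × ℝ) : ℝ :=
  -((3/4) * ((lam * Real.sin p.1 + Real.sin (zeta p.1 lam))^3 / Real.sin (zeta p.1 lam)) *
    Real.cos ((p.1 - p.2)/2) * Real.sin (zeta p.1 lam + (p.1 - p.2)/2))

namespace Stmt8Aux

/-- the square-root weight -/
noncomputable def w (lam x : ℝ) : ℝ := Real.sqrt (1 - lam^2 * Real.cos x ^ 2)

lemma harg {lam : ℝ} (h0 : 0 < lam) (h1 : lam ≤ 1) (x : ℝ) :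
    0 ≤ 1 - lam^2 * Real.cos x ^ 2 := by
  have hc := Real.cos_sq_le_one x
  have hc0 : (0:ℝ) ≤ Real.cos x ^ 2 := sq_nonneg _
  nlinarith

lemma hw_sq {lam : ℝ} (h0 : 0 < lam) (h1 : lam ≤ 1) (x : ℝ) :
    w lam x ^ 2 = 1 - lam^2 * Real.cos x ^ 2 :=
  Real.sq_sqrt (harg h0 h1 x)

lemma hsinz {lam : ℝ} (h0 : 0 < lam) (h1 : lam ≤ 1) (x : ℝ) :
    Real.sin (zeta x lam) = w lam x := by
  unfold zeta w
  exact Real.sin_arcsin (le_trans (by norm_num) (Real.sqrt_nonneg _))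
    (Real.sqrt_le_one.2 (by nlinarith [sq_nonneg (lam * Real.cos x)]))

lemma hcosz {lam : ℝ} (h0 : 0 < lam) (h1 : lam ≤ 1) (x : ℝ) :
    Real.cos (zeta x lam) = lam * |Real.cos x| := by
  unfold zeta
  rw [Real.cos_arcsin, Real.sq_sqrt (harg h0 h1 x)]
  have : 1 - (1 - lam^2 * Real.cos x ^ 2) = (lam * Real.cos x)^2 := by ring
  rw [this, Real.sqrt_sq_eq_abs, abs_mul, abs_of_pos h0]

lemma hwzero {lam : ℝ} (h0 : 0 < lam) (h1 : lam ≤ 1) {x : ℝ} (hw : w lam x = 0) :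
    Real.sin x = 0 ∧ lam^2 = 1 := by
  have h := (Real.sqrt_eq_zero (harg h0 h1 x)).1 hw
  have hc := Real.cos_sq_le_one x
  have hs := Real.sin_sq_add_cos_sq x
  have hl2 : (0:ℝ) ≤ 1 - lam^2 := by nlinarith
  have key := mul_nonneg hl2 (sq_nonneg (Real.cos x))
  constructor
  · have : Real.sin x ^ 2 = 0 := by nlinarith
    exact pow_eq_zero_iff (by norm_num) |>.1 this
  · nlinarith


lemma contw (lam : ℝ) : Continuous (w lam) :=
  (continuous_const.sub (continuous_const.mul ((Real.continuous_cos).pow 2))).sqrt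

lemma w_even (lam x : ℝ) : w lam (-x) = w lam x := by
  unfold w; rw [Real.cos_neg]

/-- `t ↦ t * √t` has derivative `(3/2)√t` everywhere. -/
lemma hasDerivAt_self_mul_sqrt (t : ℝ) :
    HasDerivAt (fun s : ℝ => s * Real.sqrt s) (3/2 * Real.sqrt t) t := by
  rcases lt_trichotomy t 0 with h | h | h
  · have hs : Real.sqrt t = 0 := Real.sqrt_eq_zero_of_nonpos h.le
    rw [hs, mul_zero]
    have hev : (fun s : ℝ => s * Real.sqrt s) =ᶠ[nhds t] fun _ => 0 := by
      filter_upwards [eventually_lt_nhds h] with s hs'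
      rw [Real.sqrt_eq_zero_of_nonpos hs'.le, mul_zero]
    exact (hasDerivAt_const t 0).congr_of_eventuallyEq hev
  · subst h
    rw [Real.sqrt_zero, mul_zero]
    rw [hasDerivAt_iff_tendsto_slope]
    have hcongr : Set.EqOn (slope (fun s : ℝ => s * Real.sqrt s) 0) Real.sqrt {(0:ℝ)}ᶜ := by
      intro s hs
      have hs0 : s ≠ 0 := hs
      simp only [slope_def_field, div_eq_iff hs0]
      field_simp [Real.sqrt_zero]
      ring
    have : Filter.Tendsto Real.sqrt (nhdsWithin 0 {(0:ℝ)}ᶜ) (nhds 0) := by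
      have := (Real.continuous_sqrt.tendsto 0)
      rw [Real.sqrt_zero] at this
      exact this.mono_left nhdsWithin_le_nhds
    exact this.congr' (by
      filter_upwards [self_mem_nhdsWithin] with s hs
      exact (hcongr hs).symm)
  · have hne : Real.sqrt t ≠ 0 := ne_of_gt (Real.sqrt_pos.2 h)
    have hm := (hasDerivAt_id t).mul (hasDerivAt_sqrt (ne_of_gt h))
    refine hm.congr_deriv ?_
    have ht : Real.sqrt t * Real.sqrt t = t := Real.mul_self_sqrt h.le
    field_simp
    nlinarith [ht, show id t = t from rfl]

lemma odd_integral {f : ℝ → ℝ} (hf : ∀ x, f (-x) = - f x) :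
    ∫ x in (-(π/2))..(π/2), f x = 0 := by
  have h1 : ∫ x in (-(π/2))..(π/2), f (-x) = ∫ x in (-(π/2))..(π/2), f x := by
    simpa using intervalIntegral.integral_comp_neg (a := -(π/2)) (b := π/2) f
  have h2 : ∫ x in (-(π/2))..(π/2), f (-x) = - ∫ x in (-(π/2))..(π/2), f x := by
    rw [show (fun x => f (-x)) = fun x => -(f x) from funext fun x => hf x]
    exact intervalIntegral.integral_neg
  linarith [h1, h2.symm.trans h1]

/-- Step A: integrating against `ν⋆`. -/
lemma integral_nuStar (f : ℝ × ℝ → ℝ) (hf : Measurable f) :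
    ∫ p, f p ∂nuStar =
      ∫ x in Set.Icc (-(π/2)) (π/2), Real.cos x * f (x, x) := by
  rw [nuStar, integral_map (show AEMeasurable (fun x : ℝ => (x,x)) gammaM from
      (measurable_id.prodMk measurable_id).aemeasurable)
    hf.aestronglyMeasurable, gammaM]
  rw [show (fun φ : ℝ => ENNReal.ofReal (Real.cos φ))
      = fun φ : ℝ => ((Real.cos φ).toNNReal : ℝ≥0∞) from rfl]
  rw [integral_withDensity_eq_integral_smul
    (Real.continuous_cos.measurable.real_toNNReal) _]
  refine setIntegral_congr_fun measurableSet_Icc fun x hx => ?_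
  have : ((Real.cos x).toNNReal : ℝ) = Real.cos x :=
    Real.coe_toNNReal _ (Real.cos_nonneg_of_mem_Icc hx)
  simp [NNReal.smul_def, this]


lemma hle : -(π/2) ≤ π/2 := by linarith [Real.pi_pos]

/-- FTC for the even part of the transversal integrand. -/
lemma intT_even (lam : ℝ) :
    ∫ x in (-(π/2))..(π/2),
      ((1-lam^2)*Real.cos x^2 + 4*lam^2*Real.sin x^2*Real.cos x^2) = π/2 := by
  set F : ℝ → ℝ := fun x =>
    (1-lam^2)*(x/2 + Real.sin x*Real.cos x/2) + 4*lam^2*(x/8 - Real.sin (4*x)/32) with hF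
  have hderiv : ∀ x ∈ Set.uIcc (-(π/2)) (π/2), HasDerivAt F
      ((1-lam^2)*Real.cos x^2 + 4*lam^2*Real.sin x^2*Real.cos x^2) x := by
    intro x _
    have h1 : HasDerivAt (fun x : ℝ => x/2 + Real.sin x*Real.cos x/2)
        (1/2 + (Real.cos x*Real.cos x + Real.sin x*(-Real.sin x))/2) x := by
      exact ((hasDerivAt_id x).div_const 2).add
        (((Real.hasDerivAt_sin x).mul (Real.hasDerivAt_cos x)).div_const 2)
    have h4x : HasDerivAt (fun x : ℝ => Real.sin (4*x)) (Real.cos (4*x)*(4*1)) x :=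
      (Real.hasDerivAt_sin (4*x)).comp x ((hasDerivAt_id x).const_mul 4)
    have h2 : HasDerivAt (fun x : ℝ => x/8 - Real.sin (4*x)/32)
        (1/8 - Real.cos (4*x)*(4*1)/32) x :=
      ((hasDerivAt_id x).div_const 8).sub (h4x.div_const 32)
    have hsum := (h1.const_mul (1-lam^2)).add (h2.const_mul (4*lam^2))
    refine hsum.congr_deriv ?_
    symm
    have h4 : Real.cos (4*x) = 2*(2*Real.cos x^2-1)^2-1 := by
      rw [show (4:ℝ)*x = 2*(2*x) by ring, Real.cos_two_mul, Real.cos_two_mul]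
    rw [h4]
    have hsc := Real.sin_sq_add_cos_sq x
    linear_combination ((1-lam^2)/2 + 4*lam^2*Real.cos x^2) * hsc
  have hcont : Continuous fun x : ℝ =>
      (1-lam^2)*Real.cos x^2 + 4*lam^2*Real.sin x^2*Real.cos x^2 := by continuity
  rw [intervalIntegral.integral_eq_sub_of_hasDerivAt hderiv
    (hcont.intervalIntegrable _ _)]
  have hs2 : Real.sin (4*(π/2)) = 0 := by
    rw [show (4:ℝ)*(π/2) = 2*π by ring, Real.sin_two_pi]
  have hs3 : Real.sin (4*(-(π/2))) = 0 := by
    rw [show (4:ℝ)*(-(π/2)) = -(2*π) by ring, Real.sin_neg, Real.sin_two_pi, neg_zero]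
  simp [hF, Real.cos_pi_div_two, Real.sin_pi_div_two, hs2, hs3, Real.sin_neg,
    Real.cos_neg]
  ring

/-- FTC for the even part of the longitudinal integrand. -/
lemma intL_even {lam : ℝ} (h0 : 0 < lam) (h1 : lam ≤ 1) :
    ∫ x in (-(π/2))..(π/2),
      (3*lam^2*Real.sin x^2 + (1 - lam^2*Real.cos x^2)) * w lam x * Real.cos x = 2 := by
  set F : ℝ → ℝ := fun x =>
    Real.sin x * ((1 - lam^2*Real.cos x^2) * Real.sqrt (1 - lam^2*Real.cos x^2)) with hF
  have hderiv : ∀ x ∈ Set.uIcc (-(π/2)) (π/2), HasDerivAt F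
      ((3*lam^2*Real.sin x^2 + (1 - lam^2*Real.cos x^2)) * w lam x * Real.cos x) x := by
    intro x _
    have hu : HasDerivAt (fun x : ℝ => 1 - lam^2*Real.cos x^2)
        (2*lam^2*Real.cos x*Real.sin x) x := by
      have := (hasDerivAt_const x (1:ℝ)).sub
        (((Real.hasDerivAt_cos x).pow 2).const_mul (lam^2))
      refine this.congr_deriv ?_
      push_cast
      ring
    have hg := (hasDerivAt_self_mul_sqrt (1 - lam^2*Real.cos x^2)).comp x hu
    have hm := (Real.hasDerivAt_sin x).mul hg
    refine hm.congr_deriv ?_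
    unfold w
    simp only [Function.comp]
    ring
  have hcont : Continuous fun x : ℝ =>
      (3*lam^2*Real.sin x^2 + (1 - lam^2*Real.cos x^2)) * w lam x * Real.cos x := by
    exact (((continuous_const.mul (Real.continuous_sin.pow 2)).add
      (continuous_const.sub (continuous_const.mul (Real.continuous_cos.pow 2)))).mul
      (contw lam)).mul Real.continuous_cos
  rw [intervalIntegral.integral_eq_sub_of_hasDerivAt hderiv
    (hcont.intervalIntegrable _ _)]
  simp [hF, Real.sin_pi_div_two, Real.cos_pi_div_two, Real.sin_neg, Real.cos_neg]
  norm_num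

/-- continuity of the divided odd piece -/
lemma cont_gdiv {lam : ℝ} (h0 : 0 < lam) (h1 : lam ≤ 1) :
    Continuous fun x => Real.sin x^3 * Real.cos x^2 / w lam x := by
  rcases eq_or_lt_of_le h1 with heq | hlt
  · subst heq
    have hid : (fun x => Real.sin x^3 * Real.cos x^2 / w 1 x)
        = fun x => Real.sin x * |Real.sin x| * Real.cos x^2 := by
      funext x
      have hw1 : w 1 x = |Real.sin x| := by
        unfold w
        rw [show 1 - (1:ℝ)^2*Real.cos x^2 = Real.sin x^2 by
          linear_combination -Real.sin_sq_add_cos_sq x, Real.sqrt_sq_eq_abs]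
      rw [hw1]
      by_cases hs : Real.sin x = 0
      · simp [hs]
      · have habs : |Real.sin x| ≠ 0 := abs_ne_zero.2 hs
        have h2 : |Real.sin x| * |Real.sin x| = Real.sin x^2 := by
          rw [← sq_abs]; ring
        rw [div_eq_iff habs]
        linear_combination -(Real.sin x * Real.cos x^2) * h2
    rw [hid]
    exact (Real.continuous_sin.mul (continuous_abs.comp Real.continuous_sin)).mul
      (Real.continuous_cos.pow 2)
  · refine ((Real.continuous_sin.pow 3).mul (Real.continuous_cos.pow 2)).div
      (contw lam) fun x => ?_
    have hc := Real.cos_sq_le_one x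
    have : lam^2*Real.cos x^2 < 1 := by nlinarith [sq_nonneg (Real.cos x)]
    exact ne_of_gt (Real.sqrt_pos.2 (by linarith))

/-- value of the transversal integral -/
lemma intT {lam : ℝ} (h0 : 0 < lam) (h1 : lam ≤ 1) :
    ∫ x in (-(π/2))..(π/2),
      (3*lam/4)*((lam*Real.sin x + w lam x)^3 / w lam x)*Real.cos x^2
      = 3*π*lam/8 := by
  set oT : ℝ → ℝ := fun x =>
    lam^3*(Real.sin x^3*Real.cos x^2 / w lam x) + 3*lam*Real.sin x*w lam x*Real.cos x^2
    with hoT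
  set eT : ℝ → ℝ := fun x =>
    (1-lam^2)*Real.cos x^2 + 4*lam^2*Real.sin x^2*Real.cos x^2 with heT
  have hpt : ∀ x, (3*lam/4)*((lam*Real.sin x + w lam x)^3 / w lam x)*Real.cos x^2
      = (3*lam/4)*(oT x + eT x) := by
    intro x
    by_cases hw : w lam x = 0
    · obtain ⟨hs, hl2⟩ := hwzero h0 h1 hw
      rw [hoT, heT]
      simp only [hw, hs, div_zero]
      rw [show (1:ℝ)-lam^2 = 0 by linarith]
      ring
    · have hw2 := hw_sq h0 h1 x
      have hsc := Real.sin_sq_add_cos_sq x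
      have hcube : (lam*Real.sin x + w lam x)^3
          = lam^3*Real.sin x^3 + (3*lam^2*Real.sin x^2
            + 3*lam*Real.sin x*(w lam x) + (w lam x)^2)*(w lam x) := by ring
      rw [hcube, add_div, mul_div_cancel_right₀ _ hw, hoT, heT]
      rw [mul_div_assoc]
      linear_combination ((3*lam/4)*Real.cos x^2)*hw2
        - ((3*lam/4)*lam^2*Real.cos x^2)*hsc
  rw [intervalIntegral.integral_congr (g := fun x => (3*lam/4)*(oT x + eT x))
    (fun x _ => hpt x)]
  rw [intervalIntegral.integral_const_mul]
  have hoTc : Continuous oT := by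
    exact (continuous_const.mul (cont_gdiv h0 h1)).add
      (((continuous_const.mul Real.continuous_sin).mul (contw lam)).mul
        (Real.continuous_cos.pow 2))
  have heTc : Continuous eT := by
    exact (continuous_const.mul (Real.continuous_cos.pow 2)).add
      ((continuous_const.mul (Real.continuous_sin.pow 2)).mul (Real.continuous_cos.pow 2))
  rw [intervalIntegral.integral_add (hoTc.intervalIntegrable _ _)
    (heTc.intervalIntegrable _ _)]
  have hodd : ∫ x in (-(π/2))..(π/2), oT x = 0 := by
    apply odd_integral
    intro x
    rw [hoT]
    simp only [Real.sin_neg, Real.cos_neg, w_even]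
    ring
  rw [hodd, heT, intT_even lam]
  ring

/-- value of the longitudinal integral -/
lemma intL {lam : ℝ} (h0 : 0 < lam) (h1 : lam ≤ 1) :
    ∫ x in (-(π/2))..(π/2),
      (3/4)*(lam*Real.sin x + w lam x)^3*Real.cos x = 3/2 := by
  set oL : ℝ → ℝ := fun x =>
    (3/4)*(lam^3*Real.sin x^3 + 3*lam*Real.sin x*(1 - lam^2*Real.cos x^2))*Real.cos x
    with hoL
  set eL : ℝ → ℝ := fun x =>
    (3/4)*((3*lam^2*Real.sin x^2 + (1 - lam^2*Real.cos x^2)) * w lam x * Real.cos x)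
    with heL
  have hpt : ∀ x, (3/4)*(lam*Real.sin x + w lam x)^3*Real.cos x = oL x + eL x := by
    intro x
    have hw2 := hw_sq h0 h1 x
    rw [hoL, heL]
    linear_combination ((3/4)*Real.cos x*(3*lam*Real.sin x + w lam x))*hw2
  rw [intervalIntegral.integral_congr (g := fun x => oL x + eL x) (fun x _ => hpt x)]
  have hoLc : Continuous oL := by
    apply Continuous.mul _ Real.continuous_cos
    apply continuous_const.mul
    exact (continuous_const.mul (Real.continuous_sin.pow 3)).add
      ((continuous_const.mul Real.continuous_sin).mul
        (continuous_const.sub (continuous_const.mul (Real.continuous_cos.pow 2))))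
  have heLc : Continuous eL := by
    apply continuous_const.mul
    exact (((continuous_const.mul (Real.continuous_sin.pow 2)).add
      (continuous_const.sub (continuous_const.mul (Real.continuous_cos.pow 2)))).mul
      (contw lam)).mul Real.continuous_cos
  rw [intervalIntegral.integral_add (hoLc.intervalIntegrable _ _)
    (heLc.intervalIntegrable _ _)]
  have hodd : ∫ x in (-(π/2))..(π/2), oL x = 0 := by
    apply odd_integral
    intro x
    rw [hoL]
    simp only [Real.sin_neg, Real.cos_neg]
    ring
  have heval : ∫ x in (-(π/2))..(π/2), eL x = 3/2 := by
    rw [heL]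
    rw [intervalIntegral.integral_const_mul, intL_even h0 h1]
    norm_num
  rw [hodd, heval]
  norm_num


lemma zeta_eq (lam : ℝ) : (fun x => zeta x lam) = fun x => Real.arcsin (w lam x) := rfl

lemma cont_zeta (lam : ℝ) : Continuous fun x : ℝ => zeta x lam := by
  rw [zeta_eq]
  exact Real.continuous_arcsin.comp (contw lam)

lemma meas_cT (lam : ℝ) : Measurable (cT lam) := by
  have hz : Continuous fun p : ℝ × ℝ => zeta p.1 lam := (cont_zeta lam).comp continuous_fst
  have m1 : Measurable fun p : ℝ × ℝ => (lam * Real.sin p.1 + Real.sin (zeta p.1 lam))^3 :=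
    (((continuous_const.mul (Real.continuous_sin.comp continuous_fst)).add
      (Real.continuous_sin.comp hz)).pow 3).measurable
  have m2 : Measurable fun p : ℝ × ℝ => Real.sin (zeta p.1 lam) :=
    (Real.continuous_sin.comp hz).measurable
  have m3 : Measurable fun p : ℝ × ℝ => Real.cos ((p.1 - p.2)/2) :=
    (Real.continuous_cos.comp ((continuous_fst.sub continuous_snd).div_const 2)).measurable
  have m4 : Measurable fun p : ℝ × ℝ => Real.cos (zeta p.1 lam + (p.1 - p.2)/2) :=
    (Real.continuous_cos.comp
      (hz.add ((continuous_fst.sub continuous_snd).div_const 2))).measurable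
  exact ((measurable_const.mul (m1.div m2)).mul m3).mul m4

lemma meas_cL (lam : ℝ) : Measurable (cL lam) := by
  have hz : Continuous fun p : ℝ × ℝ => zeta p.1 lam := (cont_zeta lam).comp continuous_fst
  have m1 : Measurable fun p : ℝ × ℝ => (lam * Real.sin p.1 + Real.sin (zeta p.1 lam))^3 :=
    (((continuous_const.mul (Real.continuous_sin.comp continuous_fst)).add
      (Real.continuous_sin.comp hz)).pow 3).measurable
  have m2 : Measurable fun p : ℝ × ℝ => Real.sin (zeta p.1 lam) :=
    (Real.continuous_sin.comp hz).measurable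
  have m3 : Measurable fun p : ℝ × ℝ => Real.cos ((p.1 - p.2)/2) :=
    (Real.continuous_cos.comp ((continuous_fst.sub continuous_snd).div_const 2)).measurable
  have m4 : Measurable fun p : ℝ × ℝ => Real.sin (zeta p.1 lam + (p.1 - p.2)/2) :=
    (Real.continuous_sin.comp
      (hz.add ((continuous_fst.sub continuous_snd).div_const 2))).measurable
  exact (((measurable_const.mul (m1.div m2)).mul m3).mul m4).neg

end Stmt8Aux

open Stmt8Aux in
theorem stmt_8 (lam : ℝ) (h0 : 0 < lam) (h1 : lam ≤ 1) :
    ((∫ p, cT lam p ∂nuStar) =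
      ∫ x in Set.Icc (-(π/2)) (π/2),
        (3/4) * ((lam * Real.sin x + Real.sin (zeta x lam))^3 / Real.sin (zeta x lam)) *
          Real.cos (zeta x lam) * Real.cos x) ∧
    (∫ p, cT lam p ∂nuStar) = 3 * π * lam / 8 ∧
    ((∫ p, cL lam p ∂nuStar) =
      -∫ x in Set.Icc (-(π/2)) (π/2),
        (3/4) * ((lam * Real.sin x + Real.sin (zeta x lam))^3 / Real.sin (zeta x lam)) *
          Real.sin (zeta x lam) * Real.cos x) ∧
    (∫ p, cL lam p ∂nuStar) = -(3/2) := by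
  have hAT := integral_nuStar (cT lam) (meas_cT lam)
  have hAL := integral_nuStar (cL lam) (meas_cL lam)
  -- pointwise simplifications on the diagonal
  have hdiagT : ∀ x, Real.cos x * cT lam (x, x)
      = (3/4) * ((lam * Real.sin x + Real.sin (zeta x lam))^3 / Real.sin (zeta x lam)) *
        Real.cos (zeta x lam) * Real.cos x := by
    intro x
    unfold cT
    simp only [sub_self, zero_div, Real.cos_zero, add_zero, mul_one]
    ring
  have hdiagL : ∀ x, Real.cos x * cL lam (x, x)
      = -((3/4) * ((lam * Real.sin x + Real.sin (zeta x lam))^3 / Real.sin (zeta x lam)) *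
        Real.sin (zeta x lam) * Real.cos x) := by
    intro x
    unfold cL
    simp only [sub_self, zero_div, Real.cos_zero, add_zero, mul_one]
    ring
  have hT1 : (∫ p, cT lam p ∂nuStar) =
      ∫ x in Set.Icc (-(π/2)) (π/2),
        (3/4) * ((lam * Real.sin x + Real.sin (zeta x lam))^3 / Real.sin (zeta x lam)) *
          Real.cos (zeta x lam) * Real.cos x := by
    rw [hAT]
    exact setIntegral_congr_fun measurableSet_Icc fun x _ => hdiagT x
  have hL1 : (∫ p, cL lam p ∂nuStar) =
      -∫ x in Set.Icc (-(π/2)) (π/2),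
        (3/4) * ((lam * Real.sin x + Real.sin (zeta x lam))^3 / Real.sin (zeta x lam)) *
          Real.sin (zeta x lam) * Real.cos x := by
    rw [hAL, ← integral_neg]
    exact setIntegral_congr_fun measurableSet_Icc fun x _ => hdiagL x
  refine ⟨hT1, ?_, hL1, ?_⟩
  · -- transversal value
    rw [hT1]
    have hcongr : ∫ x in Set.Icc (-(π/2)) (π/2),
        (3/4) * ((lam * Real.sin x + Real.sin (zeta x lam))^3 / Real.sin (zeta x lam)) *
          Real.cos (zeta x lam) * Real.cos x
        = ∫ x in Set.Icc (-(π/2)) (π/2),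
            (3*lam/4)*((lam*Real.sin x + w lam x)^3 / w lam x)*Real.cos x^2 := by
      refine setIntegral_congr_fun measurableSet_Icc fun x hx => ?_
      rw [hsinz h0 h1 x, hcosz h0 h1 x, abs_of_nonneg (Real.cos_nonneg_of_mem_Icc hx)]
      ring
    rw [hcongr, integral_Icc_eq_integral_Ioc,
      ← intervalIntegral.integral_of_le hle]
    exact intT h0 h1
  · -- longitudinal value
    rw [hAL]
    have hcongr : ∫ x in Set.Icc (-(π/2)) (π/2), Real.cos x * cL lam (x, x)
        = ∫ x in Set.Icc (-(π/2)) (π/2),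
            -((3/4)*(lam*Real.sin x + w lam x)^3*Real.cos x) := by
      refine setIntegral_congr_fun measurableSet_Icc fun x _ => ?_
      rw [hdiagL x, hsinz h0 h1 x]
      by_cases hw : w lam x = 0
      · obtain ⟨hs, _⟩ := hwzero h0 h1 hw
        rw [hw, hs]
        simp
      · field_simp
    rw [hcongr, integral_Icc_eq_integral_Ioc, ← intervalIntegral.integral_of_le hle,
      intervalIntegral.integral_neg]
    rw [intL h0 h1]
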